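/- For all natural numbers l and n with 1 ≤ l ≤ n, S(l,n) = C(l,n). -/

import Mathlib

/-- `S(l,n) = (-1)^n * ∑_{i=0}^{n} ∑_{p=0}^{i} (-1)^p * binom(n+1, i-p) * p^l`,
with the convention `0^0 = 1`. -/
def S (l n : ℕ) : ℚ :=
  (-1) ^ n * ∑ i ∈ Finset.range (n + 1), ∑ p ∈ Finset.range (i + 1),
    (-1) ^ p * (Nat.choose (n + 1) (i - p) : ℚ) * (p : ℚ) ^ l

/-- `C(l,n) = (-1)^(n-l) * ∑_{k=1}^{n} ((2^n - 2^(n-k))/(k+1))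
  * ∑_{t=0}^{k+1} (-1)^t * binom(k+1, t) * t^(l+1)`. -/
def C (l n : ℕ) : ℚ :=
  (-1) ^ (n - l) * ∑ k ∈ Finset.Icc 1 n,
    (((2 : ℚ) ^ n - (2 : ℚ) ^ (n - k)) / (k + 1)) *
      ∑ t ∈ Finset.range (k + 2), (-1) ^ t * (Nat.choose (k + 1) t : ℚ) * (t : ℚ) ^ (l + 1)

def Aq (L r : ℕ) : ℚ := ∑ t ∈ Finset.range (r+1), (-1)^t * (r.choose t : ℚ) * (t:ℚ)^L

lemma alt_choose_sum {m : ℕ} (hm : m ≠ 0) :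
    ∑ t ∈ Finset.range (m+1), (-1:ℚ)^t * (m.choose t : ℚ) = 0 := by
  have h := Int.alternating_sum_range_choose_of_ne hm
  have h2 : ((∑ t ∈ Finset.range (m+1), ((-1)^t * (m.choose t:ℤ)) : ℤ) : ℚ) = 0 := by
    rw [h]; norm_num
  push_cast at h2
  exact h2

lemma Aq_rec (L r : ℕ) : Aq (L+1) (r+1) = (r+1) * (Aq L (r+1) - Aq L r) := by
  have key : ∀ t ∈ Finset.range (r+2),
      (-1:ℚ)^t * ((r+1).choose t : ℚ) * (t:ℚ)^(L+1)
        = (r+1) * ((-1)^t * ((r+1).choose t : ℚ) * (t:ℚ)^L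
            - (-1)^t * (r.choose t : ℚ) * (t:ℚ)^L) := by
    intro t _
    rcases Nat.eq_zero_or_pos t with ht | ht
    · subst ht; simp
    · obtain ⟨s, rfl⟩ : ∃ s, t = s + 1 := ⟨t - 1, by omega⟩
      have hnat : (r+1) * (r.choose s) = (r+1).choose (s+1) * (s+1) :=
        Nat.add_one_mul_choose_eq r s
      have hpas : ((r+1).choose (s+1) : ℚ) = (r.choose (s+1) : ℚ) + (r.choose s : ℚ) := by
        rw [Nat.choose_succ_succ]; push_cast; ring
      have hq : ((s+1):ℚ) * ((r+1).choose (s+1) : ℚ)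
          = (r+1) * (((r+1).choose (s+1) : ℚ) - (r.choose (s+1) : ℚ)) := by
        have h1 : ((r:ℚ)+1) * (r.choose s : ℚ) = ((r+1).choose (s+1) : ℚ) * ((s:ℚ)+1) := by
          exact_mod_cast congrArg (Nat.cast : ℕ → ℚ) hnat
        have h2 : ((r+1).choose (s+1) : ℚ) - (r.choose (s+1) : ℚ) = (r.choose s : ℚ) := by
          rw [hpas]; ring
        push_cast
        rw [h2, h1]; ring
      have : ((s+1:ℕ):ℚ)^(L+1) = ((s+1:ℕ):ℚ) * ((s+1:ℕ):ℚ)^L := by ring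
      push_cast at hq ⊢
      calc (-1:ℚ)^(s+1) * ((r+1).choose (s+1) : ℚ) * ((s+1):ℚ)^(L+1)
          = ((-1:ℚ)^(s+1) * (((s+1):ℚ) * ((r+1).choose (s+1) : ℚ))) * ((s+1):ℚ)^L := by ring
        _ = ((-1:ℚ)^(s+1) * ((r+1) * (((r+1).choose (s+1) : ℚ) - (r.choose (s+1) : ℚ)))) * ((s+1):ℚ)^L := by rw [hq]
        _ = (r+1) * ((-1)^(s+1) * ((r+1).choose (s+1) : ℚ) * ((s+1):ℚ)^L
            - (-1)^(s+1) * (r.choose (s+1) : ℚ) * ((s+1):ℚ)^L) := by ring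
  unfold Aq
  rw [Finset.sum_congr rfl key, ← Finset.mul_sum, Finset.sum_sub_distrib]
  congr 2
  rw [Finset.sum_range_succ]
  simp

lemma Aq_vanish : ∀ L r : ℕ, L < r → Aq L r = 0 := by
  intro L
  induction L with
  | zero =>
    intro r hr
    unfold Aq
    have : ∀ t ∈ Finset.range (r+1), (-1:ℚ)^t * (r.choose t : ℚ) * (t:ℚ)^0
        = (-1:ℚ)^t * (r.choose t : ℚ) := by intro t _; ring
    rw [Finset.sum_congr rfl this]
    exact alt_choose_sum (by omega)
  | succ L ih =>
    intro r hr
    obtain ⟨s, rfl⟩ : ∃ s, r = s + 1 := ⟨r - 1, by omega⟩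
    rw [Aq_rec, ih (s+1) (by omega), ih s (by omega)]
    ring

lemma alt_choose_sum' {m : ℕ} (hm : m ≠ 0) :
    ∑ t ∈ Finset.range (m+1), (-1:ℚ)^t * (m.choose t : ℚ) = 0 := by
  have h := Int.alternating_sum_range_choose_of_ne hm
  have h2 : ((∑ t ∈ Finset.range (m+1), ((-1)^t * (m.choose t:ℤ)) : ℤ) : ℚ) = 0 := by
    rw [h]; norm_num
  push_cast at h2
  exact h2

lemma triangle_swap {M : Type*} [AddCommMonoid M] (n : ℕ) (F : ℕ → ℕ → M) :
    ∑ p ∈ Finset.range (n+1), ∑ j ∈ Finset.range (n+1-p), F p j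
      = ∑ j ∈ Finset.range (n+1), ∑ p ∈ Finset.range (n+1-j), F p j := by
  rw [Finset.sum_sigma', Finset.sum_sigma']
  refine Finset.sum_nbij' (fun x => ⟨x.2, x.1⟩) (fun x => ⟨x.2, x.1⟩) ?_ ?_
    (fun _ _ => rfl) (fun _ _ => rfl) (fun _ _ => rfl) <;>
  · simp only [Finset.mem_sigma, Finset.mem_range, Sigma.forall]
    intro a b h
    omega

lemma choose_delta (p t M : ℕ) (hpM : p ≤ M) :
    ∑ r ∈ Finset.Icc t M, (-1:ℚ)^r * (p.choose r : ℚ) * (r.choose t : ℚ)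
      = (-1)^t * (if p = t then 1 else 0) := by
  rcases lt_or_ge p t with h | h
  · rw [Finset.sum_eq_zero, if_neg (by omega)]
    · ring
    intro r hr
    rw [Nat.choose_eq_zero_of_lt (lt_of_lt_of_le h (Finset.mem_Icc.mp hr).1)]
    push_cast; ring
  · -- t ≤ p
    have hsub : Finset.Icc t p ⊆ Finset.Icc t M := Finset.Icc_subset_Icc_right hpM
    rw [← Finset.sum_subset hsub (by
      intro r hr hnr
      have : p < r := by
        simp only [Finset.mem_Icc] at hr hnr; omega
      rw [Nat.choose_eq_zero_of_lt this]; push_cast; ring)]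
    have hkey : ∀ r ∈ Finset.Icc t p, (-1:ℚ)^r * (p.choose r : ℚ) * (r.choose t : ℚ)
        = (-1:ℚ)^r * (p.choose t : ℚ) * ((p-t).choose (r-t) : ℚ) := by
      intro r hr
      simp only [Finset.mem_Icc] at hr
      have := Nat.choose_mul (n := p) hr.1
      have hc : (p.choose r : ℚ) * (r.choose t : ℚ) = (p.choose t : ℚ) * ((p-t).choose (r-t) : ℚ) := by
        exact_mod_cast congrArg (Nat.cast (R := ℚ)) this
      calc (-1:ℚ)^r * (p.choose r : ℚ) * (r.choose t : ℚ)
          = (-1:ℚ)^r * ((p.choose r : ℚ) * (r.choose t : ℚ)) := by ring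
        _ = (-1:ℚ)^r * ((p.choose t : ℚ) * ((p-t).choose (r-t) : ℚ)) := by rw [hc]
        _ = (-1:ℚ)^r * (p.choose t : ℚ) * ((p-t).choose (r-t) : ℚ) := by ring
    rw [Finset.sum_congr rfl hkey]
    have : ∑ r ∈ Finset.Icc t p, (-1:ℚ)^r * (p.choose t : ℚ) * ((p-t).choose (r-t) : ℚ)
        = ∑ u ∈ Finset.range (p-t+1), (-1:ℚ)^(t+u) * (p.choose t : ℚ) * ((p-t).choose u : ℚ) := by
      rw [← Finset.Ico_add_one_right_eq_Icc, Finset.sum_Ico_eq_sum_range]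
      apply Finset.sum_congr (by congr 1; omega)
      intro u _
      simp [Nat.add_sub_cancel_left]
    rw [this]
    rcases Nat.eq_or_lt_of_le h with rfl | hlt
    · simp [if_pos]
    · rw [if_neg (by omega)]
      have h0 : p - t ≠ 0 := by omega
      have : ∑ u ∈ Finset.range (p-t+1), (-1:ℚ)^(t+u) * (p.choose t : ℚ) * ((p-t).choose u : ℚ)
          = (-1:ℚ)^t * (p.choose t : ℚ) * ∑ u ∈ Finset.range (p-t+1), (-1:ℚ)^u * ((p-t).choose u : ℚ) := by
        rw [Finset.mul_sum]
        apply Finset.sum_congr rfl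
        intro u _
        rw [pow_add]; ring
      rw [this, alt_choose_sum' h0]
      ring

lemma rep (l p : ℕ) :
    ∑ r ∈ Finset.range (l+1), (-1:ℚ)^r * Aq l r * (p.choose r : ℚ) = (p:ℚ)^l := by
  set M := max l p with hM
  have hlM : l ≤ M := le_max_left _ _
  have hpM : p ≤ M := le_max_right _ _
  have hext : ∑ r ∈ Finset.range (l+1), (-1:ℚ)^r * Aq l r * (p.choose r : ℚ)
      = ∑ r ∈ Finset.range (M+1), (-1:ℚ)^r * Aq l r * (p.choose r : ℚ) := by
    apply Finset.sum_subset
    · exact Finset.range_subset_range.mpr (by omega)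
    · intro r _ hr
      rw [Aq_vanish l r (by simp only [Finset.mem_range] at hr ⊢; omega)]
      ring
  rw [hext]
  unfold Aq
  calc ∑ r ∈ Finset.range (M+1), (-1:ℚ)^r *
          (∑ t ∈ Finset.range (r+1), (-1)^t * (r.choose t : ℚ) * (t:ℚ)^l) * (p.choose r : ℚ)
      = ∑ r ∈ Finset.Ico 0 (M+1), ∑ t ∈ Finset.Ico 0 (r+1),
          ((-1:ℚ)^t * (t:ℚ)^l) * ((-1:ℚ)^r * (p.choose r : ℚ) * (r.choose t : ℚ)) := by
        apply Finset.sum_congr (by rw [Finset.range_eq_Ico])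
        intro r _
        rw [Finset.mul_sum, Finset.sum_mul, Finset.range_eq_Ico]
        apply Finset.sum_congr rfl
        intro t _
        ring
    _ = ∑ t ∈ Finset.Ico 0 (M+1), ∑ r ∈ Finset.Ico t (M+1),
          ((-1:ℚ)^t * (t:ℚ)^l) * ((-1:ℚ)^r * (p.choose r : ℚ) * (r.choose t : ℚ)) := by
        rw [← Finset.sum_Ico_Ico_comm]
    _ = ∑ t ∈ Finset.range (M+1), (if p = t then ((t:ℚ))^l else 0) := by
        rw [Finset.range_eq_Ico]
        apply Finset.sum_congr rfl
        intro t _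
        rw [← Finset.mul_sum, Finset.Ico_add_one_right_eq_Icc, choose_delta p t M hpM]
        rcases eq_or_ne p t with rfl | hne
        · have h1 : (-1:ℚ)^p * (-1:ℚ)^p = 1 := by rw [← mul_pow]; norm_num
          simp only [if_pos rfl, eq_self_iff_true, if_true]
          linear_combination ((p:ℚ))^l * h1
        · simp [if_neg hne, if_neg (by omega : ¬ p = t)]
    _ = (p:ℚ)^l := by
        rw [Finset.sum_ite_eq (Finset.range (M+1)) p (fun t => ((t:ℚ))^l)]
        rw [if_pos (Finset.mem_range.mpr (by omega))]

def fq (n p : ℕ) : ℚ := ∑ j ∈ Finset.range (n+1-p), ((n+1).choose j : ℚ)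

def SB (r n : ℕ) : ℚ := ∑ p ∈ Finset.range (n+1), (-1)^p * (p.choose r : ℚ) * fq n p

lemma fq_top (n : ℕ) : fq n (n+1) = 0 := by
  unfold fq
  rw [show n+1-(n+1) = 0 by omega]
  simp

lemma fq_zero (n : ℕ) : fq n 0 = 2^(n+1) - 1 := by
  unfold fq
  have h := Nat.sum_range_choose (n+1)
  have h2 : ((∑ m ∈ Finset.range (n+2), (n+1).choose m : ℕ) : ℚ) = 2^(n+1) := by
    rw [h]; push_cast; ring
  push_cast at h2
  rw [Finset.sum_range_succ] at h2
  simp only [Nat.choose_self, Nat.cast_one] at h2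
  have h3 : n+1-0 = n+1 := by omega
  rw [h3]
  linarith

lemma fq_pascal (n p : ℕ) (h : p ≤ n) : fq (n+1) (p+1) = fq n p + fq n (p+1) := by
  unfold fq
  rw [show n+1+1-(p+1) = (n-p)+1 by omega, show n+1-p = (n-p)+1 by omega,
     show n+1-(p+1) = n-p by omega]
  rw [Finset.sum_range_succ', Finset.sum_range_succ']
  have hterm : ∀ j ∈ Finset.range (n-p), ((n+1+1).choose (j+1) : ℚ)
      = ((n+1).choose j : ℚ) + ((n+1).choose (j+1) : ℚ) := by
    intro j _
    rw [Nat.choose_succ_succ (n+1) j]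
    push_cast; ring
  rw [Finset.sum_congr rfl hterm, Finset.sum_add_distrib]
  simp
  ring

lemma SB_zero (n : ℕ) : SB 0 n = 2 ^ n := by
  cases n with
  | zero =>
    unfold SB fq
    norm_num
  | succ n =>
    unfold SB
    rw [Finset.sum_range_succ']
    have hterm : ∀ p ∈ Finset.range (n+1),
        (-1:ℚ)^(p+1) * ((p+1).choose 0 : ℚ) * fq (n+1) (p+1)
          = -(((-1:ℚ)^p * fq n p) - ((-1:ℚ)^(p+1) * fq n (p+1))) := by
      intro p hp
      rw [fq_pascal n p (by simp at hp; omega)]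
      simp [pow_succ]; ring
    rw [Finset.sum_congr rfl hterm, Finset.sum_neg_distrib,
        Finset.sum_range_sub' (fun p => (-1:ℚ)^p * fq n p) (n+1)]
    simp [fq_zero, fq_top]
    ring

lemma SB_step (r n : ℕ) : SB (r+1) (n+1) = - SB r n := by
  unfold SB
  rw [Finset.sum_range_succ']
  have h0 : (-1:ℚ)^0 * ((0:ℕ).choose (r+1) : ℚ) * fq (n+1) 0 = 0 := by simp
  rw [h0, add_zero]
  have hterm : ∀ p ∈ Finset.range (n+1),
      (-1:ℚ)^(p+1) * ((p+1).choose (r+1) : ℚ) * fq (n+1) (p+1)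
        = -((-1:ℚ)^p * (p.choose r : ℚ) * fq n p)
          - (((-1:ℚ)^p * (p.choose (r+1) : ℚ) * fq n p)
             - ((-1:ℚ)^(p+1) * ((p+1).choose (r+1) : ℚ) * fq n (p+1))) := by
    intro p hp
    rw [fq_pascal n p (by simp at hp; omega)]
    have hc : ((p+1).choose (r+1) : ℚ) = (p.choose r : ℚ) + (p.choose (r+1) : ℚ) := by
      rw [Nat.choose_succ_succ p r]; push_cast; ring
    rw [hc]
    ring
  rw [Finset.sum_congr rfl hterm, Finset.sum_sub_distrib, Finset.sum_neg_distrib,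
      Finset.sum_range_sub' (fun p => (-1:ℚ)^p * (p.choose (r+1) : ℚ) * fq n p) (n+1)]
  rw [fq_top]
  simp

lemma SB_val (r : ℕ) : ∀ n : ℕ, r ≤ n → SB r n = (-1)^r * 2^(n-r) := by
  induction r with
  | zero =>
    intro n _
    rw [SB_zero]
    simp
  | succ r ih =>
    intro n hn
    obtain ⟨m, rfl⟩ : ∃ m, n = m + 1 := ⟨n - 1, by omega⟩
    rw [SB_step, ih m (by omega), show m+1-(r+1) = m-r by omega, pow_succ]
    ring

lemma S_as (l n : ℕ) :
    S l n = (-1)^n * ∑ p ∈ Finset.range (n+1), (-1)^p * (p:ℚ)^l * fq n p := by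
  unfold S
  congr 1
  calc ∑ i ∈ Finset.range (n+1), ∑ p ∈ Finset.range (i+1),
        (-1:ℚ)^p * ((n+1).choose (i-p) : ℚ) * (p:ℚ)^l
      = ∑ j ∈ Finset.range (n+1), ∑ p ∈ Finset.range (n+1-j),
        (-1:ℚ)^p * ((n+1).choose ((n-j)-p) : ℚ) * (p:ℚ)^l := by
        rw [← Finset.sum_range_reflect]
        apply Finset.sum_congr rfl
        intro j hj
        simp only [Finset.mem_range] at hj
        rw [show n+1-1-j = n-j by omega, show (n-j)+1 = n+1-j by omega]
    _ = ∑ p ∈ Finset.range (n+1), ∑ j ∈ Finset.range (n+1-p),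
        (-1:ℚ)^p * ((n+1).choose ((n-j)-p) : ℚ) * (p:ℚ)^l := by
        rw [triangle_swap n (fun j p => (-1:ℚ)^p * ((n+1).choose ((n-j)-p) : ℚ) * (p:ℚ)^l)]
    _ = ∑ p ∈ Finset.range (n+1), (-1:ℚ)^p * (p:ℚ)^l * fq n p := by
        apply Finset.sum_congr rfl
        intro p hp
        simp only [Finset.mem_range] at hp
        unfold fq
        rw [Finset.mul_sum]
        rw [show n+1-p = (n-p)+1 by omega]
        rw [← Finset.sum_range_reflect (fun j => (-1:ℚ)^p * (p:ℚ)^l * ((n+1).choose j : ℚ)) ((n-p)+1)]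
        apply Finset.sum_congr rfl
        intro j hj
        simp only [Finset.mem_range] at hj
        rw [show (n-p)+1-1-j = (n-j)-p by omega]
        ring

lemma Aq_zero {l : ℕ} (hl : 1 ≤ l) : Aq l 0 = 0 := by
  unfold Aq
  simp [zero_pow (by omega : l ≠ 0)]

theorem S_val {l n : ℕ} (hl : 1 ≤ l) (hln : l ≤ n) :
    S l n = (-1)^n * ∑ k ∈ Finset.Icc 1 n, 2^(n-k) * Aq l k := by
  rw [S_as]
  congr 1
  calc ∑ p ∈ Finset.range (n+1), (-1:ℚ)^p * (p:ℚ)^l * fq n p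
      = ∑ p ∈ Finset.range (n+1), ∑ r ∈ Finset.range (l+1),
          ((-1:ℚ)^r * Aq l r) * ((-1:ℚ)^p * (p.choose r : ℚ) * fq n p) := by
        apply Finset.sum_congr rfl
        intro p _
        rw [← rep l p, Finset.mul_sum, Finset.sum_mul]
        apply Finset.sum_congr rfl
        intro r _
        ring
    _ = ∑ r ∈ Finset.range (l+1), ((-1:ℚ)^r * Aq l r) * SB r n := by
        rw [Finset.sum_comm]
        apply Finset.sum_congr rfl
        intro r _
        unfold SB
        rw [Finset.mul_sum]
    _ = ∑ r ∈ Finset.range (l+1), 2^(n-r) * Aq l r := by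
        apply Finset.sum_congr rfl
        intro r hr
        simp only [Finset.mem_range] at hr
        rw [SB_val r n (by omega)]
        have : (-1:ℚ)^r * (-1:ℚ)^r = 1 := by rw [← mul_pow]; norm_num
        calc (-1:ℚ)^r * Aq l r * ((-1)^r * 2^(n-r))
            = ((-1:ℚ)^r * (-1:ℚ)^r) * Aq l r * 2^(n-r) := by ring
          _ = 2^(n-r) * Aq l r := by rw [this]; ring
    _ = ∑ k ∈ Finset.Icc 1 n, 2^(n-k) * Aq l k := by
        have h1 : Finset.range (l+1) = insert 0 (Finset.Icc 1 l) := by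
          ext x
          simp [Finset.mem_range, Finset.mem_Icc, Finset.mem_insert]
          omega
        rw [h1, Finset.sum_insert (by simp)]
        rw [Aq_zero hl, mul_zero, zero_add]
        apply Finset.sum_subset (Finset.Icc_subset_Icc_right hln)
        intro k hk hnk
        simp only [Finset.mem_Icc] at hk hnk
        rw [Aq_vanish l k (by omega)]
        ring

theorem C_val {l n : ℕ} (hl : 1 ≤ l) (hln : l ≤ n) :
    C l n = (-1)^(n-l) * (-1) * ∑ k ∈ Finset.Icc 1 n, 2^(n-k) * Aq l k := by
  unfold C
  rw [mul_assoc]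
  congr 1
  have step1 : ∀ k ∈ Finset.Icc 1 n,
      (((2:ℚ)^n - (2:ℚ)^(n-k)) / (k+1)) *
        (∑ t ∈ Finset.range (k+2), (-1:ℚ)^t * ((k+1).choose t : ℚ) * (t:ℚ)^(l+1))
      = ((2:ℚ)^n - (2:ℚ)^(n-k)) * (Aq l (k+1) - Aq l k) := by
    intro k _
    have hA : ∑ t ∈ Finset.range (k+2), (-1:ℚ)^t * ((k+1).choose t : ℚ) * (t:ℚ)^(l+1)
        = Aq (l+1) (k+1) := rfl
    rw [hA, Aq_rec l k]
    have hk : ((k:ℚ)+1) ≠ 0 := by positivity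
    field_simp
  rw [Finset.sum_congr rfl step1]
  -- telescoping
  have key : ∑ k ∈ Finset.Icc 1 n,
      (((2:ℚ)^n - (2:ℚ)^(n-k)) * (Aq l (k+1) - Aq l k) + 2^(n-k) * Aq l k) = 0 := by
    rw [← Finset.Ico_add_one_right_eq_Icc, Finset.sum_Ico_eq_sum_range]
    have hterm : ∀ i ∈ Finset.range (n+1-1),
        (((2:ℚ)^n - (2:ℚ)^(n-(1+i))) * (Aq l ((1+i)+1) - Aq l (1+i)) + 2^(n-(1+i)) * Aq l (1+i))
          = ((2:ℚ)^n - (2:ℚ)^(n-(i+1))) * Aq l (i+2) - ((2:ℚ)^n - (2:ℚ)^(n-i)) * Aq l (i+1) := by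
      intro i hi
      simp only [Finset.mem_range] at hi
      rw [show 1+i = i+1 by omega, show (i+1)+1 = i+2 by omega,
          show n-i = (n-(i+1))+1 by omega, pow_succ]
      ring
    rw [Finset.sum_congr rfl hterm,
        Finset.sum_range_sub (fun i => ((2:ℚ)^n - (2:ℚ)^(n-i)) * Aq l (i+1)) (n+1-1)]
    rw [show n+1-1 = n by omega, Nat.sub_self, Nat.sub_zero, pow_zero,
        Aq_vanish l (n+1) (by omega)]
    ring
  have : ∑ k ∈ Finset.Icc 1 n, ((2:ℚ)^n - (2:ℚ)^(n-k)) * (Aq l (k+1) - Aq l k)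
      = -∑ k ∈ Finset.Icc 1 n, 2^(n-k) * Aq l k := by
    have := key
    rw [Finset.sum_add_distrib] at this
    linarith
  rw [this]
  ring

noncomputable def Phi : ℕ → Polynomial ℚ
  | l => Polynomial.C (-1/2 : ℚ) * Polynomial.X ^ l -
      Polynomial.C (1/2 : ℚ) * ∑ j ∈ (Finset.range l).attach,
        Polynomial.C ((l.choose j.1 : ℕ) : ℚ) * Phi j.1
  decreasing_by exact Finset.mem_range.mp j.2

lemma Phi_def (l : ℕ) : Phi l = Polynomial.C (-1/2 : ℚ) * Polynomial.X ^ l -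
      Polynomial.C (1/2 : ℚ) * ∑ j ∈ Finset.range l,
        Polynomial.C ((l.choose j : ℕ) : ℚ) * Phi j := by
  rw [Phi]
  congr 1
  rw [← Finset.sum_attach (Finset.range l) (fun j => Polynomial.C ((l.choose j : ℕ) : ℚ) * Phi j)]

lemma Phi_FE : ∀ l : ℕ, ∀ x : ℚ, (Phi l).eval (x+1) + (Phi l).eval x = -x^l := by
  intro l
  induction l using Nat.strong_induction_on with
  | _ l ih =>
    intro x
    rw [Phi_def l]
    simp only [Polynomial.eval_sub, Polynomial.eval_mul, Polynomial.eval_C, Polynomial.eval_pow,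
      Polynomial.eval_X, Polynomial.eval_finset_sum]
    have hih : ∀ j ∈ Finset.range l,
        ((l.choose j : ℕ) : ℚ) * (Phi j).eval (x+1) + ((l.choose j : ℕ) : ℚ) * (Phi j).eval x
          = -(((l.choose j : ℕ) : ℚ) * x^j) := by
      intro j hj
      have := ih j (Finset.mem_range.mp hj) x
      calc ((l.choose j : ℕ) : ℚ) * (Phi j).eval (x+1) + ((l.choose j : ℕ) : ℚ) * (Phi j).eval x
          = ((l.choose j : ℕ) : ℚ) * ((Phi j).eval (x+1) + (Phi j).eval x) := by ring
        _ = -(((l.choose j : ℕ) : ℚ) * x^j) := by rw [this]; ring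
    have hbin : (x+1)^l = ∑ j ∈ Finset.range (l+1), x^j * ((l.choose j : ℕ) : ℚ) := by
      have := add_pow x 1 l
      simpa using this
    have hbin' : ∑ j ∈ Finset.range l, ((l.choose j : ℕ) : ℚ) * x^j = (x+1)^l - x^l := by
      rw [hbin, Finset.sum_range_succ]
      simp [mul_comm]
    -- combine
    have hsum : ∑ j ∈ Finset.range l, ((l.choose j : ℕ):ℚ) * (Phi j).eval (x+1)
        + ∑ j ∈ Finset.range l, ((l.choose j : ℕ):ℚ) * (Phi j).eval x
        = -((x+1)^l - x^l) := by
      rw [← Finset.sum_add_distrib, Finset.sum_congr rfl hih, Finset.sum_neg_distrib, hbin']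
    ring_nf
    ring_nf at hsum
    linarith [hsum]

lemma Phi_natDegree (l : ℕ) : (Phi l).natDegree ≤ l := by
  induction l using Nat.strong_induction_on with
  | _ l ih =>
    rw [Phi_def l]
    apply le_trans (Polynomial.natDegree_sub_le _ _)
    apply max_le
    · apply le_trans (Polynomial.natDegree_C_mul_le _ _)
      simp
    · apply le_trans (Polynomial.natDegree_C_mul_le _ _)
      apply Polynomial.natDegree_sum_le_of_forall_le
      intro j hj
      apply le_trans (Polynomial.natDegree_C_mul_le _ _)
      exact le_trans (ih j (Finset.mem_range.mp hj)) (le_of_lt (Finset.mem_range.mp hj))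

lemma FE_unique {p q : Polynomial ℚ}
    (h : ∀ x : ℚ, p.eval (x+1) + p.eval x = q.eval (x+1) + q.eval x) : p = q := by
  set d := p - q with hd
  have hdx : ∀ x : ℚ, d.eval (x+1) = - d.eval x := by
    intro x
    have := h x
    simp only [hd, Polynomial.eval_sub]
    linarith
  have h2 : ∀ m : ℕ, d.eval ((2*m : ℕ) : ℚ) = d.eval 0 := by
    intro m
    induction m with
    | zero => norm_num
    | succ m ih =>
      have e1 := hdx ((2*m : ℕ) : ℚ)
      have e2 := hdx (((2*m : ℕ) : ℚ)+1)
      have hc : ((2*(m+1) : ℕ) : ℚ) = (((2*m : ℕ) : ℚ)+1)+1 := by push_cast; ring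
      rw [hc, e2, e1, neg_neg]
      exact ih
  have hroot : {x : ℚ | (d - Polynomial.C (d.eval 0)).IsRoot x}.Infinite := by
    apply Set.Infinite.mono (s := Set.range (fun m : ℕ => ((2*m : ℕ) : ℚ)))
    · rintro x ⟨m, rfl⟩
      simp only [Set.mem_setOf_eq, Polynomial.IsRoot, Polynomial.eval_sub, Polynomial.eval_C]
      rw [h2 m]
      ring
    · apply Set.infinite_range_of_injective
      intro a b hab
      simpa using hab
  have hzero : d - Polynomial.C (d.eval 0) = 0 := Polynomial.eq_zero_of_infinite_isRoot _ hroot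
  have hdC : d = Polynomial.C (d.eval 0) := by
    have := sub_eq_zero.mp hzero
    exact this
  have h1 : d.eval (0+1) = - d.eval 0 := hdx 0
  have h1' : d.eval 1 = d.eval 0 := by rw [hdC]; simp
  have h0 : d.eval 0 = 0 := by
    norm_num at h1
    linarith
  have : d = 0 := by rw [hdC, h0]; simp
  have := sub_eq_zero.mp this
  exact this

lemma Phi_eval_zero_even {l : ℕ} (hl : 1 ≤ l) (he : Even l) : (Phi l).eval 0 = 0 := by
  set ψ : Polynomial ℚ :=
    Polynomial.C ((-1:ℚ)^l) * (Phi l).comp (Polynomial.C 1 - Polynomial.X) with hψ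
  have hψeval : ∀ x : ℚ, ψ.eval x = (-1)^l * (Phi l).eval (1 - x) := by
    intro x
    simp [hψ, Polynomial.eval_comp]
  have hFEψ : ∀ x : ℚ, ψ.eval (x+1) + ψ.eval x = -x^l := by
    intro x
    rw [hψeval, hψeval, show (1:ℚ) - (x+1) = -x by ring]
    have hfe := Phi_FE l (-x)
    rw [show (-x) + 1 = 1 - x by ring] at hfe
    rw [Even.neg_one_pow he, one_mul, one_mul]
    rw [Even.neg_pow he] at hfe
    linarith
  have huniq : ψ = Phi l := FE_unique (fun x => by rw [hFEψ x, Phi_FE l x])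
  have h0 : (Phi l).eval 0 = (-1:ℚ)^l * (Phi l).eval 1 := by
    conv_lhs => rw [← huniq]
    simpa using hψeval 0
  have h1 : (Phi l).eval (0+1) + (Phi l).eval 0 = -(0:ℚ)^l := Phi_FE l 0
  rw [zero_pow (by omega : l ≠ 0)] at h1
  norm_num at h1
  rw [Even.neg_one_pow he, one_mul] at h0
  linarith

def Gs (l m : ℕ) : ℚ := ∑ p ∈ Finset.range (m+1), (-1)^p * (p:ℚ)^l

lemma Phi_alt_vanish {l m : ℕ} (h : l < m) :
    ∑ j ∈ Finset.range (m+1), (-1:ℚ)^j * (m.choose j : ℚ) * (Phi l).eval ((j:ℕ):ℚ) = 0 := by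
  have hdeg : (Phi l).natDegree < l+1 := by have := Phi_natDegree l; omega
  have hterm : ∀ j ∈ Finset.range (m+1),
      (-1:ℚ)^j * (m.choose j : ℚ) * (Phi l).eval (j:ℚ)
        = ∑ r ∈ Finset.range (l+1),
            (Phi l).coeff r * ((-1:ℚ)^j * (m.choose j : ℚ) * (j:ℚ)^r) := by
    intro j _
    rw [Polynomial.eval_eq_sum_range' hdeg ((j:ℕ):ℚ), Finset.mul_sum]
    apply Finset.sum_congr rfl
    intro r _
    ring
  rw [Finset.sum_congr rfl hterm, Finset.sum_comm]
  apply Finset.sum_eq_zero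
  intro r hr
  rw [← Finset.mul_sum]
  have : ∑ j ∈ Finset.range (m+1), (-1:ℚ)^j * (m.choose j : ℚ) * (j:ℚ)^r = Aq r m := rfl
  rw [this, Aq_vanish r m (by simp only [Finset.mem_range] at hr; omega), mul_zero]

lemma G_phi {l : ℕ} (hl : 1 ≤ l) :
    ∀ m : ℕ, Gs l m = (-1)^(m+1) * (Phi l).eval ((m:ℚ)+1) - (Phi l).eval 0 := by
  intro m
  induction m with
  | zero =>
    unfold Gs
    have h := Phi_FE l 0
    rw [zero_pow (by omega : l ≠ 0)] at h
    norm_num at h ⊢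
    rw [zero_pow (by omega : l ≠ 0)]
    linarith
  | succ m ih =>
    unfold Gs at ih ⊢
    rw [Finset.sum_range_succ, ih]
    have hfe := Phi_FE l ((m:ℚ)+1)
    have hc : ((m+1 : ℕ) : ℚ) = (m:ℚ)+1 := by push_cast; ring
    rw [hc]
    have hs : (-1:ℚ)^(m+1+1) = -(-1:ℚ)^(m+1) := by rw [pow_succ]; ring
    rw [hs]
    linear_combination (-1:ℚ)^(m+1) * hfe

lemma sum_choose_shift (n : ℕ) :
    ∑ j ∈ Finset.range (n+1), ((n+1).choose (j+1) : ℚ) = 2^(n+1) - 1 := by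
  have h := Nat.sum_range_choose (n+1)
  have h2 : ((∑ m ∈ Finset.range (n+2), (n+1).choose m : ℕ) : ℚ) = 2^(n+1) := by
    rw [h]; push_cast; ring
  push_cast at h2
  rw [Finset.sum_range_succ' (fun t => ((n+1).choose t : ℚ)) (n+1)] at h2
  simp only [Nat.choose_zero_right, Nat.cast_one] at h2
  linarith

theorem S_phi {l n : ℕ} (hl : 1 ≤ l) (hln : l ≤ n) :
    S l n = (-1)^(n+1) * 2^(n+1) * (Phi l).eval 0 := by
  rw [S_as]
  have step1 : ∑ p ∈ Finset.range (n+1), (-1:ℚ)^p * (p:ℚ)^l * fq n p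
      = ∑ j ∈ Finset.range (n+1), ((n+1).choose j : ℚ) * Gs l (n-j) := by
    calc ∑ p ∈ Finset.range (n+1), (-1:ℚ)^p * (p:ℚ)^l * fq n p
        = ∑ p ∈ Finset.range (n+1), ∑ j ∈ Finset.range (n+1-p),
            (-1:ℚ)^p * (p:ℚ)^l * ((n+1).choose j : ℚ) := by
          apply Finset.sum_congr rfl
          intro p _
          unfold fq
          rw [Finset.mul_sum]
      _ = ∑ j ∈ Finset.range (n+1), ∑ p ∈ Finset.range (n+1-j),
            (-1:ℚ)^p * (p:ℚ)^l * ((n+1).choose j : ℚ) := by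
          rw [triangle_swap n (fun p j => (-1:ℚ)^p * (p:ℚ)^l * ((n+1).choose j : ℚ))]
      _ = ∑ j ∈ Finset.range (n+1), ((n+1).choose j : ℚ) * Gs l (n-j) := by
          apply Finset.sum_congr rfl
          intro j hj
          simp only [Finset.mem_range] at hj
          unfold Gs
          rw [Finset.mul_sum, show n+1-j = (n-j)+1 by omega]
          apply Finset.sum_congr rfl
          intro p _
          ring
  rw [step1]
  have step2 : ∑ j ∈ Finset.range (n+1), ((n+1).choose j : ℚ) * Gs l (n-j)
      = ∑ j ∈ Finset.range (n+1), ((n+1).choose (j+1) : ℚ) * Gs l j := by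
    rw [← Finset.sum_range_reflect (fun j => ((n+1).choose (j+1) : ℚ) * Gs l j) (n+1)]
    apply Finset.sum_congr rfl
    intro j hj
    simp only [Finset.mem_range] at hj
    rw [show n+1-1-j = n-j by omega]
    congr 2
    have hs : (n+1).choose ((n+1)-j) = (n+1).choose j := Nat.choose_symm (by omega)
    rw [show (n-j)+1 = (n+1)-j by omega, hs]
  rw [step2]
  have step3 : ∀ j ∈ Finset.range (n+1), ((n+1).choose (j+1):ℚ) * Gs l j
      = (-1:ℚ)^(j+1) * ((n+1).choose (j+1):ℚ) * (Phi l).eval ((j:ℚ)+1)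
        - ((n+1).choose (j+1):ℚ) * (Phi l).eval 0 := by
    intro j _
    rw [G_phi hl j]
    ring
  rw [Finset.sum_congr rfl step3, Finset.sum_sub_distrib]
  have hfirst : ∑ j ∈ Finset.range (n+1),
      (-1:ℚ)^(j+1) * ((n+1).choose (j+1):ℚ) * (Phi l).eval ((j:ℚ)+1)
        = -(Phi l).eval 0 := by
    have hfull := Phi_alt_vanish (show l < n+1 by omega)
    rw [Finset.sum_range_succ'
      (fun t => (-1:ℚ)^t * ((n+1).choose t : ℚ) * (Phi l).eval ((t:ℕ):ℚ)) (n+1)] at hfull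
    simp only [pow_zero, Nat.choose_zero_right, Nat.cast_one, Nat.cast_zero, one_mul] at hfull
    have hcast : ∀ j ∈ Finset.range (n+1),
        (-1:ℚ)^(j+1) * ((n+1).choose (j+1):ℚ) * (Phi l).eval (((j+1:ℕ)):ℚ)
          = (-1:ℚ)^(j+1) * ((n+1).choose (j+1):ℚ) * (Phi l).eval ((j:ℚ)+1) := by
      intro j _
      norm_num
    rw [Finset.sum_congr rfl hcast] at hfull
    linarith
  rw [hfirst, ← Finset.sum_mul, sum_choose_shift]
  rw [pow_succ]
  ring

/-- For all `l, n` with `1 ≤ l ≤ n`, `S(l,n) = C(l,n)`. -/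
theorem stmt_9 (l n : ℕ) (hl : 1 ≤ l) (hln : l ≤ n) : S l n = C l n := by
  rcases Nat.even_or_odd l with he | ho
  · -- even case: both sides vanish
    have hS := S_phi hl hln
    rw [Phi_eval_zero_even hl he] at hS
    have hS0 : S l n = 0 := by rw [hS]; ring
    have hSv := S_val hl hln
    rw [hS0] at hSv
    have hne : ((-1:ℚ))^n ≠ 0 := pow_ne_zero _ (by norm_num)
    have hSum : ∑ k ∈ Finset.Icc 1 n, 2^(n-k) * Aq l k = 0 :=
      (mul_eq_zero.mp hSv.symm).resolve_left hne
    rw [hS0, C_val hl hln, hSum]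
    ring
  · -- odd case: signs agree
    rw [S_val hl hln, C_val hl hln]
    have hsign : (-1:ℚ)^(n-l) * (-1) = (-1:ℚ)^n := by
      have h1 : (-1:ℚ)^(n-l) * (-1:ℚ)^l = (-1:ℚ)^n := by
        rw [← pow_add, show n-l+l = n by omega]
      rw [Odd.neg_one_pow ho] at h1
      exact h1
    rw [hsign]
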